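/- For every integer k and every C² function h on an open subset of ℝ⁴ (avoiding N(Z)=0 when k<0), one has □(N(Z)^k · h(Z)) = 4k N(Z)^{k−1} · (deg + k + 1)h(Z) + N(Z)^k · □h(Z), where deg = z⁰∂₀ + z¹∂₁ + z²∂₂ + z³∂₃ is the Euler degree operator. -/

import Mathlib

noncomputable section

/-- Real partial derivative `∂/∂zⁱ`. -/
def pdr (i : Fin 4) (f : (Fin 4 → ℝ) → ℝ) : (Fin 4 → ℝ) → ℝ :=
  fun x => fderiv ℝ f x (Pi.single i 1)

/-- The four-dimensional Laplacian. -/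
def lapr (f : (Fin 4 → ℝ) → ℝ) : (Fin 4 → ℝ) → ℝ :=
  fun x => ∑ i : Fin 4, pdr i (pdr i f) x

/-- The Euler degree operator `deg = ∑ᵢ zⁱ∂ᵢ`. -/
def degr (f : (Fin 4 → ℝ) → ℝ) : (Fin 4 → ℝ) → ℝ :=
  fun x => ∑ i : Fin 4, x i * pdr i f x

/-- `N(Z) = (z⁰)² + (z¹)² + (z²)² + (z³)²`. -/
def Nr (x : Fin 4 → ℝ) : ℝ := ∑ i : Fin 4, x i ^ 2

def Nder (x : Fin 4 → ℝ) : (Fin 4 → ℝ) →L[ℝ] ℝ :=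
  ∑ j : Fin 4, (2 * x j) • ContinuousLinearMap.proj j

lemma hasFDerivAt_Nr (x : Fin 4 → ℝ) : HasFDerivAt Nr (Nder x) x := by
  have : ∀ j : Fin 4, HasFDerivAt (fun y : Fin 4 → ℝ => y j ^ 2)
      ((2 * x j) • ContinuousLinearMap.proj (R := ℝ) (φ := fun _ : Fin 4 => ℝ) j) x := by
    intro j
    have hp : HasFDerivAt (fun y : Fin 4 → ℝ => y j)
        (ContinuousLinearMap.proj (R := ℝ) (φ := fun _ : Fin 4 => ℝ) j) x :=
      (ContinuousLinearMap.proj (R := ℝ) (φ := fun _ : Fin 4 => ℝ) j).hasFDerivAt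
    have := hp.mul hp
    refine this.congr_fderiv ?_ |>.congr_of_eventuallyEq ?_
    · ext v; simp; ring
    · filter_upwards with y; simp; ring
  have hsum := HasFDerivAt.fun_sum (u := Finset.univ) (fun j (_ : j ∈ Finset.univ) => this j)
  exact hsum

lemma Nder_apply (x : Fin 4 → ℝ) (i : Fin 4) : Nder x (Pi.single i 1) = 2 * x i := by
  simp [Nder, Pi.single_apply, mul_ite, Finset.sum_ite_eq']

lemma hasFDerivAt_Npow (m : ℤ) (x : Fin 4 → ℝ) (hx : Nr x ≠ 0 ∨ 0 ≤ m) :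
    HasFDerivAt (fun y => Nr y ^ m) (((m : ℝ) * Nr x ^ (m - 1)) • Nder x) x :=
  (hasDerivAt_zpow m (Nr x) hx).comp_hasFDerivAt x (hasFDerivAt_Nr x)

lemma pdr_Npow_mul (U : Set (Fin 4 → ℝ)) (hU : IsOpen U) (k : ℤ)
    (h : (Fin 4 → ℝ) → ℝ) (hh : ContDiffOn ℝ 2 h U)
    (hOr : ∀ y ∈ U, Nr y ≠ 0 ∨ 1 ≤ k) (i : Fin 4) :
    ∀ y ∈ U, pdr i (fun z => Nr z ^ k * h z) y
      = (k : ℝ) * Nr y ^ (k - 1) * (2 * y i) * h y + Nr y ^ k * pdr i h y := by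
  intro y hy
  have hdh : DifferentiableAt ℝ h y :=
    (hh.contDiffAt (hU.mem_nhds hy)).differentiableAt two_ne_zero
  have hN : HasFDerivAt (fun z => Nr z ^ k) (((k : ℝ) * Nr y ^ (k - 1)) • Nder y) y :=
    hasFDerivAt_Npow k y ((hOr y hy).imp id (fun h1 => le_trans zero_le_one h1))
  have hprod := hN.fun_mul hdh.hasFDerivAt
  have := hprod.fderiv
  simp only [pdr, this]
  simp [Nder_apply, smul_eq_mul, pdr]
  ring

lemma contDiffOn_pdr (U : Set (Fin 4 → ℝ)) (hU : IsOpen U)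
    (h : (Fin 4 → ℝ) → ℝ) (hh : ContDiffOn ℝ 2 h U) (i : Fin 4) :
    ContDiffOn ℝ 1 (pdr i h) U := by
  have hfd : ContDiffOn ℝ 1 (fun y => fderiv ℝ h y) U :=
    hh.fderiv_of_isOpen hU (by norm_num)
  exact (ContinuousLinearMap.apply ℝ ℝ (Pi.single i 1)).contDiff.comp_contDiffOn hfd

lemma pdr2_val (U : Set (Fin 4 → ℝ)) (hU : IsOpen U) (k : ℤ)
    (h : (Fin 4 → ℝ) → ℝ) (hh : ContDiffOn ℝ 2 h U)
    (hOr : ∀ y ∈ U, Nr y ≠ 0 ∨ 1 ≤ k) (i : Fin 4) (x : Fin 4 → ℝ) (hx : x ∈ U) :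
    pdr i (pdr i (fun z => Nr z ^ k * h z)) x
      = ((k : ℝ) * ((((k : ℝ) - 1) * Nr x ^ (k - 2)) * (2 * x i))) * (2 * x i) * h x
        + ((k : ℝ) * Nr x ^ (k - 1)) * 2 * h x
        + ((k : ℝ) * Nr x ^ (k - 1) * (2 * x i)) * pdr i h x
        + ((k : ℝ) * Nr x ^ (k - 1) * (2 * x i)) * pdr i h x
        + Nr x ^ k * pdr i (pdr i h) x := by
  have hdh : DifferentiableAt ℝ h x :=
    (hh.contDiffAt (hU.mem_nhds hx)).differentiableAt two_ne_zero
  have hpdh : DifferentiableAt ℝ (pdr i h) x :=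
    ((contDiffOn_pdr U hU h hh i).differentiableOn one_ne_zero).differentiableAt (hU.mem_nhds hx)
  -- the first derivative agrees with G near x
  have heq : pdr i (fun z => Nr z ^ k * h z) =ᶠ[nhds x]
      (fun y => (k : ℝ) * Nr y ^ (k - 1) * (2 * y i) * h y + Nr y ^ k * pdr i h y) := by
    filter_upwards [hU.mem_nhds hx] with y hy
    exact pdr_Npow_mul U hU k h hh hOr i y hy
  have hOr1 : Nr x ≠ 0 ∨ 0 ≤ k - 1 := (hOr x hx).imp id (fun h1 => by omega)
  have hOr0 : Nr x ≠ 0 ∨ 0 ≤ k := (hOr x hx).imp id (fun h1 => by omega)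
  -- differentiate G
  have hA : HasFDerivAt (fun y => (k : ℝ) * Nr y ^ (k - 1))
      ((k : ℝ) • ((((k - 1 : ℤ) : ℝ) * Nr x ^ (k - 1 - 1)) • Nder x)) x :=
    (hasFDerivAt_Npow (k - 1) x hOr1).const_mul (k : ℝ)
  have hB : HasFDerivAt (fun y : Fin 4 → ℝ => 2 * y i)
      ((2 : ℝ) • ContinuousLinearMap.proj (R := ℝ) (φ := fun _ : Fin 4 => ℝ) i) x :=
    (ContinuousLinearMap.proj (R := ℝ) (φ := fun _ : Fin 4 => ℝ) i).hasFDerivAt.const_mul 2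
  have hG := (((hA.fun_mul hB).fun_mul hdh.hasFDerivAt).fun_add
    ((hasFDerivAt_Npow k x hOr0).fun_mul hpdh.hasFDerivAt))
  have hval := hG.fderiv
  have : pdr i (pdr i (fun z => Nr z ^ k * h z)) x
      = fderiv ℝ (fun y => (k : ℝ) * Nr y ^ (k - 1) * (2 * y i) * h y
          + Nr y ^ k * pdr i h y) x (Pi.single i 1) := by
    show fderiv ℝ (pdr i (fun z => Nr z ^ k * h z)) x (Pi.single i 1) = _
    rw [heq.fderiv_eq]
  rw [this, hval]
  have h2 : (k : ℤ) - 1 - 1 = k - 2 := by ring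
  simp only [ContinuousLinearMap.add_apply, ContinuousLinearMap.smul_apply,
    Nder_apply, smul_eq_mul, h2, ContinuousLinearMap.proj_apply, Pi.single_eq_same]
  push_cast
  have hp1 : (fderiv ℝ h x) (Pi.single i 1) = pdr i h x := rfl
  have hp2 : (fderiv ℝ (pdr i h) x) (Pi.single i 1) = pdr i (pdr i h) x := rfl
  rw [hp1, hp2]
  ring

lemma key_zpow (t : ℝ) (k : ℤ) (hOr : t ≠ 0 ∨ 1 ≤ k) :
    ((k : ℝ) - 1) * t ^ (k - 2) * t = ((k : ℝ) - 1) * t ^ (k - 1) := by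
  rcases eq_or_ne t 0 with rfl | ht
  · rcases hOr with ht | hk
    · exact absurd rfl ht
    · rcases eq_or_lt_of_le hk with hk1 | hk2
      · simp [← hk1]
      · rw [zero_zpow (k - 1) (by omega)]
        ring
  · rw [mul_assoc, ← zpow_add_one₀ ht]
    have h21 : k - 2 + 1 = k - 1 := by omega
    rw [h21]


/-- for every `k ∈ ℤ` and every C² function `h` on an open subset of ℝ⁴
(avoiding `N(Z) = 0` when `k < 0`),
`□(N^k h) = 4k N^{k−1}((deg + k + 1)h) + N^k □h`. -/
theorem laplacian_Npow_mul (U : Set (Fin 4 → ℝ)) (hU : IsOpen U) (k : ℤ)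
    (h : (Fin 4 → ℝ) → ℝ) (hh : ContDiffOn ℝ 2 h U)
    (hk : k < 0 → ∀ x ∈ U, Nr x ≠ 0) :
    ∀ x ∈ U, lapr (fun y => Nr y ^ k * h y) x
      = 4 * (k : ℝ) * Nr x ^ (k - 1) * (degr h x + ((k : ℝ) + 1) * h x)
        + Nr x ^ k * lapr h x := by

  intro x hx
  by_cases hk0 : k = 0
  · subst hk0
    have hfn : (fun y => Nr y ^ (0 : ℤ) * h y) = h := by
      funext y; simp
    rw [hfn]
    simp
  · have hOr : ∀ y ∈ U, Nr y ≠ 0 ∨ 1 ≤ k := by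
      intro y hy
      rcases lt_or_ge k 0 with hneg | hpos
      · exact Or.inl (hk hneg y hy)
      · exact Or.inr (by omega)
    unfold lapr
    rw [Finset.sum_congr rfl (fun i _ => pdr2_val U hU k h hh hOr i x hx)]
    have hE : ∀ i : Fin 4,
        ((k : ℝ) * ((((k : ℝ) - 1) * Nr x ^ (k - 2)) * (2 * x i))) * (2 * x i) * h x
          + ((k : ℝ) * Nr x ^ (k - 1)) * 2 * h x
          + ((k : ℝ) * Nr x ^ (k - 1) * (2 * x i)) * pdr i h x
          + ((k : ℝ) * Nr x ^ (k - 1) * (2 * x i)) * pdr i h x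
          + Nr x ^ k * pdr i (pdr i h) x
        = (4 * (k : ℝ) * ((k : ℝ) - 1) * Nr x ^ (k - 2) * h x) * x i ^ 2
          + 2 * (k : ℝ) * Nr x ^ (k - 1) * h x
          + (4 * (k : ℝ) * Nr x ^ (k - 1)) * (x i * pdr i h x)
          + Nr x ^ k * pdr i (pdr i h) x := by
      intro i; ring
    rw [Finset.sum_congr rfl (fun i _ => hE i)]
    simp only [Finset.sum_add_distrib, ← Finset.mul_sum, Finset.sum_const,
      Finset.card_univ, Fintype.card_fin, nsmul_eq_mul]
    have hNr : ∑ i : Fin 4, x i ^ 2 = Nr x := rfl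
    have hdeg : ∑ i : Fin 4, x i * pdr i h x = degr h x := rfl
    have hlap : ∑ i : Fin 4, pdr i (pdr i h) x = lapr h x := rfl
    rw [hNr, hdeg, hlap]
    linear_combination (4 * (k : ℝ) * h x) * key_zpow (Nr x) k (hOr x hx)
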